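/- arXiv:2003.13001 — 6 statements merged into one kernel-verified Lean document; each statement's English description precedes it below -/
import Mathlib

section
/- Let f: R^d -> R be convex and L-Lipschitz differentiable with nonempty solution set, and let g_k = nabla f(x_k). Suppose hat{g}_k satisfies ||g_k - hat{g}_k||_2^2 <= eps_rel ||g_k||_2^2 + eps_abs with 0 <= eps_rel < 1, and let x_{k+1} = x_k - (1/L) hat{g}_k. If in addition ||x_k - P_*(x_k)||_2 <= R for all k, where P_* is projection onto the solution set, then the errors e_k = f(x_k) - min f satisfy e_{k+1} <= e_k - ((1-eps_rel)/(2 L R^2)) e_k^2 + eps_abs/(2L). -/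
open Set InnerProductSpace

section helpers

variable {F : Type*} [NormedAddCommGroup F] [InnerProductSpace ℝ F] [CompleteSpace F]

private lemma phi_hasDeriv (f : F → ℝ) (hdiff : Differentiable ℝ f) (x v : F) (t : ℝ) :
    HasDerivAt (fun s : ℝ => f (x + s • v)) (inner ℝ (gradient f (x + t • v)) v : ℝ) t := by
  have hc : HasDerivAt (fun s : ℝ => x + s • v) v t := by
    simpa using ((hasDerivAt_id t).smul_const v).const_add x
  have hf : HasFDerivAt f (toDual ℝ F (gradient f (x + t • v))) (x + t • v) :=
    (hasGradientAt_iff_hasFDerivAt.mp (hdiff _).hasGradientAt)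
  have := hf.comp_hasDerivAt t hc
  simp only [toDual_apply_apply] at this
  exact this

private lemma grad_ineq (f : F → ℝ) (hconv : ConvexOn ℝ Set.univ f)
    (hdiff : Differentiable ℝ f) (x y : F) :
    (inner ℝ (gradient f x) (y - x) : ℝ) ≤ f y - f x := by
  set v := y - x
  have hphi : ConvexOn ℝ Set.univ (fun s : ℝ => f (x + s • v)) := by
    have : ((fun s : ℝ => f (x + s • v)) = f ∘ (fun s : ℝ => x + s • v)) := rfl
    rw [this]
    apply hconv.comp_affineMap (AffineMap.mk (fun s : ℝ => x + s • v)
      (LinearMap.toAffineMap (LinearMap.smulRight (LinearMap.id) v)).linear ?_) |>.subset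
        (fun _ _ => mem_univ _) (convex_univ)
    · intro p v'; simp [add_smul]; abel
  have hd := phi_hasDeriv f hdiff x v 0
  have := hphi.le_slope_of_hasDerivAt (mem_univ 0) (mem_univ 1) one_pos (by simpa using hd)
  simp only [slope_def_field] at this
  simpa [v] using this

private lemma descent_lemma (f : F → ℝ) (L : ℝ) (hdiff : Differentiable ℝ f)
    (hlip : ∀ x y, ‖gradient f x - gradient f y‖ ≤ L * ‖x - y‖) (x v : F) :
    f (x + v) ≤ f x + inner ℝ (gradient f x) v + L / 2 * ‖v‖ ^ 2 := by
  set ψ : ℝ → ℝ := fun t => f (x + t • v) - t * inner ℝ (gradient f x) v - L * t ^ 2 * ‖v‖ ^ 2 / 2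
    with hψ
  have hψd : ∀ t : ℝ, HasDerivAt ψ
      ((inner ℝ (gradient f (x + t • v)) v : ℝ) - inner ℝ (gradient f x) v - L * t * ‖v‖ ^ 2) t := by
    intro t
    have h1 := phi_hasDeriv f hdiff x v t
    have h2 : HasDerivAt (fun t : ℝ => t * (inner ℝ (gradient f x) v : ℝ))
        (inner ℝ (gradient f x) v : ℝ) t := by simpa using (hasDerivAt_id t).mul_const _
    have h3 : HasDerivAt (fun t : ℝ => L * t ^ 2 * ‖v‖ ^ 2 / 2) (L * t * ‖v‖ ^ 2) t := by
      have : HasDerivAt (fun t : ℝ => t ^ 2) (2 * t) t := by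
        simpa using hasDerivAt_pow 2 t
      have := ((this.const_mul L).mul_const (‖v‖ ^ 2)).div_const 2
      exact this.congr_deriv (by ring)
    exact (h1.sub h2).sub h3
  have hanti : AntitoneOn ψ (Icc 0 1) := by
    apply antitoneOn_of_deriv_nonpos (convex_Icc 0 1)
    · exact fun t _ => ((hψd t).continuousAt).continuousWithinAt
    · exact fun t _ => ((hψd t).differentiableAt).differentiableWithinAt
    · intro t ht
      rw [interior_Icc] at ht
      rw [(hψd t).deriv]
      have hb : (inner ℝ (gradient f (x + t • v)) v : ℝ) - inner ℝ (gradient f x) v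
          ≤ L * t * ‖v‖ ^ 2 := by
        have h1 : (inner ℝ (gradient f (x + t • v)) v : ℝ) - inner ℝ (gradient f x) v
            = inner ℝ (gradient f (x + t • v) - gradient f x) v := by
          rw [inner_sub_left]
        rw [h1]
        calc (inner ℝ (gradient f (x + t • v) - gradient f x) v : ℝ)
            ≤ ‖gradient f (x + t • v) - gradient f x‖ * ‖v‖ := real_inner_le_norm _ _
          _ ≤ (L * ‖(x + t • v) - x‖) * ‖v‖ :=
              mul_le_mul_of_nonneg_right (hlip _ _) (norm_nonneg v)
          _ = L * (|t| * ‖v‖) * ‖v‖ := by rw [add_sub_cancel_left, norm_smul]; simp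
          _ = L * |t| * ‖v‖ ^ 2 := by ring
          _ = L * t * ‖v‖ ^ 2 := by rw [abs_of_pos ht.1]
      linarith
  have := hanti (left_mem_Icc.mpr zero_le_one) (right_mem_Icc.mpr zero_le_one) zero_le_one
  simp only [hψ, zero_smul, add_zero, one_smul, one_pow, zero_pow, mul_zero, zero_mul,
    mul_one, sub_zero] at this
  linarith

end helpers

/-- One-step inequality for inexact gradient descent with relative and absolute errors. -/
theorem inexact_gd_one_step {d : ℕ} (L R εrel εabs : ℝ) (hL : 0 < L) (hR : 0 < R)
    (hrel0 : 0 ≤ εrel) (hrel1 : εrel < 1) (habs : 0 ≤ εabs)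
    (f : EuclideanSpace ℝ (Fin d) → ℝ)
    (hconv : ConvexOn ℝ Set.univ f)
    (hdiff : Differentiable ℝ f)
    (hlip : ∀ x y, ‖gradient f x - gradient f y‖ ≤ L * ‖x - y‖)
    (xstar : EuclideanSpace ℝ (Fin d)) (hmin : ∀ y, f xstar ≤ f y)
    (x ghat : ℕ → EuclideanSpace ℝ (Fin d))
    (hstep : ∀ k, x (k + 1) = x k - (1 / L) • ghat k)
    (herr : ∀ k, ‖gradient f (x k) - ghat k‖ ^ 2 ≤
      εrel * ‖gradient f (x k)‖ ^ 2 + εabs)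
    (hdist : ∀ k, ∃ y, (∀ z, f y ≤ f z) ∧ ‖x k - y‖ ≤ R) :
    ∀ k, f (x (k + 1)) - f xstar ≤
      (f (x k) - f xstar)
        - ((1 - εrel) / (2 * L * R ^ 2)) * (f (x k) - f xstar) ^ 2
        + εabs / (2 * L) := by
  intro k
  set g := gradient f (x k) with hg
  set gh := ghat k
  set e := f (x k) - f xstar with he
  -- descent step
  have hstep' : x (k + 1) = x k + (-(1 / L)) • gh := by
    rw [hstep k]; module
  have hdesc : f (x (k + 1)) ≤ f (x k) + inner ℝ g ((-(1 / L)) • gh)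
      + L / 2 * ‖(-(1 / L)) • gh‖ ^ 2 := by
    rw [hstep']
    exact descent_lemma f L hdiff hlip (x k) _
  have hnorm : ‖(-(1 / L)) • gh‖ ^ 2 = (1 / L) ^ 2 * ‖gh‖ ^ 2 := by
    rw [norm_smul]; simp [mul_pow]
  have hinner : (inner ℝ g ((-(1 / L)) • gh) : ℝ) = -(1 / L) * inner ℝ g gh := by
    rw [real_inner_smul_right]
  -- key one-step inequality
  have hsq : ‖g - gh‖ ^ 2 = ‖g‖ ^ 2 - 2 * inner ℝ g gh + ‖gh‖ ^ 2 := by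
    rw [← real_inner_self_eq_norm_sq, ← real_inner_self_eq_norm_sq, ← real_inner_self_eq_norm_sq,
      inner_sub_sub_self, real_inner_comm gh g]
    ring
  have hone : f (x (k + 1)) ≤ f (x k) - 1 / (2 * L) * ‖g‖ ^ 2 + 1 / (2 * L) * ‖g - gh‖ ^ 2 := by
    have hL' : L ≠ 0 := ne_of_gt hL
    rw [hinner, hnorm] at hdesc
    have : f (x k) + -(1 / L) * inner ℝ g gh + L / 2 * ((1 / L) ^ 2 * ‖gh‖ ^ 2)
        = f (x k) - 1 / (2 * L) * ‖g‖ ^ 2 + 1 / (2 * L) * ‖g - gh‖ ^ 2 := by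
      rw [hsq]; field_simp; ring
    linarith [hdesc, this.symm.le]
  -- error bound
  have herr' := herr k
  -- distance/convexity bound
  obtain ⟨y, hy, hyR⟩ := hdist k
  have hfy : f y = f xstar := le_antisymm (hy xstar) (hmin y)
  have hconvb : e ≤ ‖g‖ * R := by
    have h1 := grad_ineq f hconv hdiff (x k) y
    have h2 : (inner ℝ g (x k - y) : ℝ) ≤ ‖g‖ * ‖x k - y‖ := real_inner_le_norm _ _
    have h3 : (inner ℝ g (y - x k) : ℝ) = -inner ℝ g (x k - y) := by
      rw [← inner_neg_right]; congr 1; abel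
    have h4 : ‖g‖ * ‖x k - y‖ ≤ ‖g‖ * R := by
      exact mul_le_mul_of_nonneg_left hyR (norm_nonneg g)
    rw [h3] at h1
    have : e = f (x k) - f y := by rw [hfy]
    linarith
  have he0 : 0 ≤ e := by simp only [he, sub_nonneg]; exact hmin (x k)
  have hesq : e ^ 2 ≤ ‖g‖ ^ 2 * R ^ 2 := by nlinarith [norm_nonneg g]
  -- key comparison
  have hkey : ((1 - εrel) / (2 * L * R ^ 2)) * e ^ 2 ≤ ((1 - εrel) / (2 * L)) * ‖g‖ ^ 2 := by
    rw [div_mul_eq_mul_div, div_mul_eq_mul_div,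
      div_le_div_iff₀ (by positivity) (by positivity)]
    have h5 : (1 - εrel) * e ^ 2 ≤ (1 - εrel) * (‖g‖ ^ 2 * R ^ 2) :=
      mul_le_mul_of_nonneg_left hesq (by linarith)
    nlinarith [mul_le_mul_of_nonneg_right h5 (by linarith : (0:ℝ) ≤ 2 * L)]
  have hfin : ((1 - εrel) / (2 * L)) * ‖g‖ ^ 2
      = 1 / (2 * L) * ‖g‖ ^ 2 - εrel / (2 * L) * ‖g‖ ^ 2 := by
    field_simp
  have herr'' : 1 / (2 * L) * ‖g - gh‖ ^ 2 ≤ εrel / (2 * L) * ‖g‖ ^ 2 + εabs / (2 * L) := by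
    have hx : εrel / (2 * L) * ‖g‖ ^ 2 + εabs / (2 * L)
        = 1 / (2 * L) * (εrel * ‖g‖ ^ 2 + εabs) := by ring
    rw [hx]
    exact mul_le_mul_of_nonneg_left herr' (by positivity)
  linarith
end

section
/- (Descent lemma for inexact proximal gradient, version 2) Under the same setting, F(x_{k+1}) <= F(x_k) - (1/(2L)) ||Delta_k||_2^2 + (1/(2L)) ||g_k - hat{g}_k||_2^2, where Delta_k = -(tilde{nabla} r(x_{k+1}) + g_k) is the ideal direction. -/
open scoped RealInnerProductSpace

lemma descent_lemma_aux {d : ℕ} (L : ℝ) (hL : 0 < L)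
    (f : EuclideanSpace ℝ (Fin d) → ℝ)
    (hdiff : Differentiable ℝ f)
    (hlip : ∀ x y, ‖gradient f x - gradient f y‖ ≤ L * ‖x - y‖)
    (x y : EuclideanSpace ℝ (Fin d)) :
    f y ≤ f x + ⟪gradient f x, y - x⟫ + L / 2 * ‖y - x‖ ^ 2 := by
  set ψ : ℝ → EuclideanSpace ℝ (Fin d) := fun t => x + t • (y - x) with hψ
  have hd : ∀ t : ℝ, HasDerivAt (fun t => f (ψ t)) ⟪gradient f (ψ t), y - x⟫ t := by
    intro t
    have h1 : HasDerivAt ψ (y - x) t := by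
      simpa [hψ] using ((hasDerivAt_id t).smul_const (y - x)).const_add x
    have h2 := ((hdiff (ψ t)).hasGradientAt).hasFDerivAt
    have h3 := h2.comp_hasDerivAt t h1
    rw [InnerProductSpace.toDual_apply_apply] at h3
    exact h3
  have hcontψ : Continuous ψ := by fun_prop
  have hcontg : Continuous (gradient f) := by
    apply LipschitzWith.continuous (K := ⟨L, hL.le⟩)
    intro a b
    rw [edist_dist, edist_dist, dist_eq_norm, dist_eq_norm]
    calc ENNReal.ofReal ‖gradient f a - gradient f b‖
        ≤ ENNReal.ofReal (L * ‖a - b‖) := ENNReal.ofReal_le_ofReal (hlip a b)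
      _ = _ := by
          rw [ENNReal.ofReal_mul hL.le]
          congr 1
          simp [ENNReal.ofReal]
          congr 1
          exact Real.toNNReal_of_nonneg hL.le
  have hcont : Continuous (fun t => ⟪gradient f (ψ t), y - x⟫) := by
    exact (Continuous.inner (hcontg.comp hcontψ) continuous_const)
  have hint : f (ψ 1) - f (ψ 0) = ∫ t in (0:ℝ)..1, ⟪gradient f (ψ t), y - x⟫ := by
    exact (intervalIntegral.integral_eq_sub_of_hasDerivAt
      (fun t _ => hd t) (hcont.intervalIntegrable 0 1)).symm
  have hψ0 : ψ 0 = x := by simp [hψ]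
  have hψ1 : ψ 1 = y := by simp [hψ]
  have hbound : ∀ t ∈ Set.Icc (0:ℝ) 1,
      ⟪gradient f (ψ t), y - x⟫ ≤ ⟪gradient f x, y - x⟫ + L * t * ‖y - x‖ ^ 2 := by
    intro t ht
    have h1 : ⟪gradient f (ψ t) - gradient f x, y - x⟫
        ≤ ‖gradient f (ψ t) - gradient f x‖ * ‖y - x‖ := real_inner_le_norm _ _
    have h2 : ‖gradient f (ψ t) - gradient f x‖ ≤ L * (t * ‖y - x‖) := by
      have := hlip (ψ t) x
      have heq : ψ t - x = t • (y - x) := by simp [hψ]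
      rw [heq, norm_smul, Real.norm_eq_abs, abs_of_nonneg ht.1] at this
      exact this
    have h3 : ⟪gradient f (ψ t) - gradient f x, y - x⟫ ≤ L * t * ‖y - x‖ ^ 2 := by
      calc ⟪gradient f (ψ t) - gradient f x, y - x⟫ ≤ _ := h1
        _ ≤ L * (t * ‖y - x‖) * ‖y - x‖ :=
            mul_le_mul_of_nonneg_right h2 (norm_nonneg _)
        _ = L * t * ‖y - x‖ ^ 2 := by ring
    rw [inner_sub_left] at h3
    linarith
  have hmono : (∫ t in (0:ℝ)..1, ⟪gradient f (ψ t), y - x⟫)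
      ≤ ∫ t in (0:ℝ)..1, (⟪gradient f x, y - x⟫ + L * t * ‖y - x‖ ^ 2) := by
    apply intervalIntegral.integral_mono_on (by norm_num)
      (hcont.intervalIntegrable 0 1)
      ((Continuous.intervalIntegrable (by fun_prop) 0 1))
    exact hbound
  have hrhs : (∫ t in (0:ℝ)..1, (⟪gradient f x, y - x⟫ + L * t * ‖y - x‖ ^ 2))
      = ⟪gradient f x, y - x⟫ + L / 2 * ‖y - x‖ ^ 2 := by
    rw [intervalIntegral.integral_add
      ((continuous_const ).intervalIntegrable 0 1)
      ((by fun_prop : Continuous fun t : ℝ => L * t * ‖y - x‖ ^ 2).intervalIntegrable 0 1)]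
    have h1 : (∫ t in (0:ℝ)..1, L * t * ‖y - x‖ ^ 2)
        = (L * ‖y - x‖ ^ 2) * ∫ t in (0:ℝ)..1, t := by
      rw [← intervalIntegral.integral_const_mul]
      congr 1; ext t; ring
    rw [h1]
    simp [integral_id]
    ring
  rw [hψ0, hψ1] at hint
  linarith [hmono.trans_eq hrhs, hint]

/-- Descent lemma for inexact proximal gradient, version 2. -/
theorem prox_descent_v2 {d : ℕ} (L : ℝ) (hL : 0 < L)
    (f r : EuclideanSpace ℝ (Fin d) → ℝ)
    (hdiff : Differentiable ℝ f)
    (hlip : ∀ x y, ‖gradient f x - gradient f y‖ ≤ L * ‖x - y‖)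
    (hr : ConvexOn ℝ Set.univ r)
    (xk xk1 ghat v : EuclideanSpace ℝ (Fin d))
    (hsub : ∀ y, r xk1 + ⟪v, y - xk1⟫ ≤ r y)
    (hstep : xk1 = xk - (1 / L) • (v + ghat)) :
    f xk1 + r xk1 ≤ f xk + r xk - (1 / (2 * L)) * ‖v + gradient f xk‖ ^ 2
      + (1 / (2 * L)) * ‖gradient f xk - ghat‖ ^ 2 := by
  set g := gradient f xk with hg
  set u := v + g with hu
  set e := g - ghat with he
  have hs : xk1 - xk = -(1 / L) • (u - e) := by
    rw [hstep]; rw [hu, he]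
    rw [show v + g - (g - ghat) = v + ghat by abel]
    simp [sub_smul, neg_smul]
    abel
  have hf : f xk1 ≤ f xk + ⟪g, xk1 - xk⟫ + L / 2 * ‖xk1 - xk‖ ^ 2 :=
    descent_lemma_aux L hL f hdiff hlip xk xk1
  have hrk : r xk1 ≤ r xk + ⟪v, xk1 - xk⟫ := by
    have := hsub xk
    have h2 : ⟪v, xk - xk1⟫ = -⟪v, xk1 - xk⟫ := by
      rw [← inner_neg_right]; congr 1; abel
    linarith [this, h2.le, h2.ge]
  have key : ⟪g, xk1 - xk⟫ + ⟪v, xk1 - xk⟫ + L / 2 * ‖xk1 - xk‖ ^ 2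
      = -(1 / (2 * L)) * ‖u‖ ^ 2 + (1 / (2 * L)) * ‖e‖ ^ 2 := by
    have h1 : ⟪g, xk1 - xk⟫ + ⟪v, xk1 - xk⟫ = ⟪u, xk1 - xk⟫ := by
      rw [hu, inner_add_left]; ring
    rw [h1, hs]
    rw [real_inner_smul_right, inner_sub_right, norm_smul]
    have hns : ‖u - e‖ ^ 2 = ‖u‖ ^ 2 - 2 * ⟪u, e⟫ + ‖e‖ ^ 2 := by
      rw [@norm_sub_sq_real]
    have hru : ⟪u, u⟫ = ‖u‖ ^ 2 := real_inner_self_eq_norm_sq u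
    rw [mul_pow, hns, hru]
    have : ‖(-(1/L) : ℝ)‖ = 1 / L := by
      rw [Real.norm_eq_abs, abs_neg, abs_of_pos (by positivity)]
    rw [this]
    field_simp
    ring
  linarith
end

section
/- (Descent lemma for inexact proximal gradient, version 3) Under the same setting, F(x_{k+1}) <= F(x_k) - (1/(12L)) ||tilde{Delta}_k||_2^2 + (5/(6L)) ||g_k - hat{g}_k||_2^2, where tilde{Delta}_k = -(tilde{nabla} r(x_{k+1}) + nabla f(x_{k+1})). -/
open scoped RealInnerProductSpace

set_option maxHeartbeats 1000000

section Aux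

variable {F : Type*} [NormedAddCommGroup F] [InnerProductSpace ℝ F] [CompleteSpace F]

/-- Descent lemma (upper quadratic bound) for functions with Lipschitz gradient. -/
lemma descent_upper (L : ℝ) (f : F → ℝ) (hdiff : Differentiable ℝ f)
    (hlip : ∀ x y, ‖gradient f x - gradient f y‖ ≤ L * ‖x - y‖) (x h : F) :
    f (x + h) ≤ f x + ⟪gradient f x, h⟫ + L / 2 * ‖h‖ ^ 2 := by
  set φ : ℝ → ℝ := fun t => f (x + t • h) - t * ⟪gradient f x, h⟫ - L / 2 * t ^ 2 * ‖h‖ ^ 2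
    with hφ
  have hφd : ∀ t : ℝ, HasDerivAt φ
      (⟪gradient f (x + t • h), h⟫ - ⟪gradient f x, h⟫ - L / 2 * (2 * t) * ‖h‖ ^ 2) t := by
    intro t
    have h1 : HasDerivAt (fun t : ℝ => x + t • h) h t := by
      simpa using ((hasDerivAt_id t).smul_const h).const_add x
    have h2 : HasGradientAt f (gradient f (x + t • h)) (x + t • h) :=
      (hdiff (x + t • h)).hasGradientAt
    have h2' := hasGradientAt_iff_hasFDerivAt.mp h2
    have h3 : HasDerivAt (fun t : ℝ => f (x + t • h))
        ((InnerProductSpace.toDual ℝ F (gradient f (x + t • h))) h) t :=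
      h2'.comp_hasDerivAt t h1
    rw [InnerProductSpace.toDual_apply_apply] at h3
    have h4 : HasDerivAt (fun t : ℝ => t * ⟪gradient f x, h⟫) ⟪gradient f x, h⟫ t := by
      simpa using (hasDerivAt_id t).mul_const ⟪gradient f x, h⟫
    have h5 : HasDerivAt (fun t : ℝ => L / 2 * t ^ 2 * ‖h‖ ^ 2)
        (L / 2 * (2 * t) * ‖h‖ ^ 2) t := by
      have := ((hasDerivAt_pow 2 t).const_mul (L / 2)).mul_const (‖h‖ ^ 2)
      simpa [mul_comm, mul_assoc, mul_left_comm] using this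
    exact (h3.sub h4).sub h5
  have hanti : AntitoneOn φ (Set.Icc (0 : ℝ) 1) := by
    apply antitoneOn_of_deriv_nonpos (convex_Icc 0 1)
    · exact fun t _ => ((hφd t).differentiableAt).continuousAt.continuousWithinAt
    · exact fun t _ => ((hφd t).differentiableAt).differentiableWithinAt
    · intro t ht
      rw [interior_Icc, Set.mem_Ioo] at ht
      rw [(hφd t).deriv]
      have hbd : ⟪gradient f (x + t • h) - gradient f x, h⟫ ≤ L * t * ‖h‖ ^ 2 := by
        calc ⟪gradient f (x + t • h) - gradient f x, h⟫
            ≤ ‖gradient f (x + t • h) - gradient f x‖ * ‖h‖ := real_inner_le_norm _ _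
          _ ≤ L * ‖(x + t • h) - x‖ * ‖h‖ := by
              have := hlip (x + t • h) x
              nlinarith [norm_nonneg h, norm_nonneg (gradient f (x + t • h) - gradient f x)]
          _ = L * t * ‖h‖ ^ 2 := by
              rw [add_sub_cancel_left, norm_smul, Real.norm_eq_abs, abs_of_pos ht.1]; ring
      rw [inner_sub_left] at hbd
      nlinarith
  have h01 := hanti (Set.left_mem_Icc.mpr zero_le_one) (Set.right_mem_Icc.mpr zero_le_one)
    zero_le_one
  simp only [hφ, zero_smul, add_zero, zero_mul, one_smul, one_pow, mul_one] at h01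
  nlinarith [h01]

/-- Descent lemma (lower quadratic bound). -/
lemma descent_lower (L : ℝ) (f : F → ℝ) (hdiff : Differentiable ℝ f)
    (hlip : ∀ x y, ‖gradient f x - gradient f y‖ ≤ L * ‖x - y‖) (x h : F) :
    f x + ⟪gradient f x, h⟫ - L / 2 * ‖h‖ ^ 2 ≤ f (x + h) := by
  have hgneg : ∀ y : F, gradient (fun z => -f z) y = -gradient f y := by
    intro y
    unfold gradient
    rw [fderiv_fun_neg, map_neg]
  have hd2 : Differentiable ℝ (fun z => -f z) := hdiff.neg
  have hl2 : ∀ a b : F, ‖gradient (fun z => -f z) a - gradient (fun z => -f z) b‖ ≤ L * ‖a - b‖ := by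
    intro a b
    rw [hgneg, hgneg]
    calc ‖-gradient f a - -gradient f b‖ = ‖gradient f a - gradient f b‖ := by
          rw [← norm_neg]; congr 1; abel
      _ ≤ L * ‖a - b‖ := hlip a b
  have := descent_upper L (fun z => -f z) hd2 hl2 x h
  rw [hgneg, inner_neg_left] at this
  linarith

/-- Key scalar inequality. -/
lemma key_ineq (n e w : F) (hw : ‖w‖ ≤ ‖n‖) :
    -⟪e, n⟫ - (1 / 6) * ⟪w, n⟫ - (1 / 2) * ‖n‖ ^ 2 ≤
      -(1 / 12) * ‖n + e + w‖ ^ 2 + (5 / 6) * ‖e‖ ^ 2 := by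
  have hexp : ‖n + e + w‖ ^ 2 =
      ‖n‖ ^ 2 + ‖e‖ ^ 2 + ‖w‖ ^ 2 + 2 * ⟪n, e⟫ + 2 * ⟪n, w⟫ + 2 * ⟪e, w⟫ := by
    rw [norm_add_sq_real (n + e) w, norm_add_sq_real n e, inner_add_left]
    ring
  have hce : ⟪n, e⟫ = ⟪e, n⟫ := real_inner_comm e n
  have hcw : ⟪n, w⟫ = ⟪w, n⟫ := real_inner_comm w n
  have h1 : ⟪e, n⟫ ≥ -(‖e‖ * ‖n‖) := neg_le_of_abs_le (abs_real_inner_le_norm e n)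
  have h2 : ⟪e, w⟫ ≤ ‖e‖ * ‖w‖ := real_inner_le_norm e w
  have h3 : ‖e‖ * ‖w‖ ≤ ‖e‖ * ‖n‖ := mul_le_mul_of_nonneg_left hw (norm_nonneg e)
  nlinarith [sq_nonneg (2 * ‖n‖ - 3 * ‖e‖), norm_nonneg n, norm_nonneg e, norm_nonneg w,
    sq_nonneg (‖n‖ - ‖w‖), sq_nonneg (‖n‖ + ‖w‖)]

end Aux

/-- Descent lemma for inexact proximal gradient, version 3. -/
theorem prox_descent_v3 {d : ℕ} (L : ℝ) (hL : 0 < L)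
    (f r : EuclideanSpace ℝ (Fin d) → ℝ)
    (hdiff : Differentiable ℝ f)
    (hlip : ∀ x y, ‖gradient f x - gradient f y‖ ≤ L * ‖x - y‖)
    (hr : ConvexOn ℝ Set.univ r)
    (xk xk1 ghat v : EuclideanSpace ℝ (Fin d))
    (hsub : ∀ y, r xk1 + ⟪v, y - xk1⟫ ≤ r y)
    (hstep : xk1 = xk - (1 / L) • (v + ghat)) :
    f xk1 + r xk1 ≤ f xk + r xk - (1 / (12 * L)) * ‖v + gradient f xk1‖ ^ 2
      + (5 / (6 * L)) * ‖gradient f xk - ghat‖ ^ 2 := by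
  set n : EuclideanSpace ℝ (Fin d) := v + ghat with hn
  set g : EuclideanSpace ℝ (Fin d) → EuclideanSpace ℝ (Fin d) := gradient f with hg
  have hu : xk1 - xk = (-(1 / L)) • n := by
    rw [hstep]; module
  have hxk1 : xk1 = xk + (-(1 / L)) • n := by
    rw [hstep]; module
  -- norms
  have hnormu : ‖xk1 - xk‖ = (1 / L) * ‖n‖ := by
    rw [hu, norm_smul, Real.norm_eq_abs, abs_neg, abs_of_pos (by positivity)]
  -- forward descent
  have hA : f xk1 ≤ f xk + ⟪g xk, xk1 - xk⟫ + L / 2 * ‖xk1 - xk‖ ^ 2 := by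
    have := descent_upper L f hdiff hlip xk (xk1 - xk)
    have hrw0 : xk + (xk1 - xk) = xk1 := by abel
    rw [hrw0] at this; exact this
  -- backward descent
  have hB : f xk1 ≤ f xk + ⟪g xk1, xk1 - xk⟫ + L / 2 * ‖xk1 - xk‖ ^ 2 := by
    have := descent_lower L f hdiff hlip xk1 (xk - xk1)
    have hrw : xk1 + (xk - xk1) = xk := by abel
    rw [hrw] at this
    have hip : ⟪g xk1, xk - xk1⟫ = -⟪g xk1, xk1 - xk⟫ := by
      rw [← inner_neg_right]; congr 1; abel
    have hnrm : ‖xk - xk1‖ = ‖xk1 - xk‖ := by rw [← norm_neg]; congr 1; abel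
    rw [hip, hnrm] at this
    linarith
  -- subgradient step
  have hR : r xk1 ≤ r xk + ⟪v, xk1 - xk⟫ := by
    have := hsub xk
    have hip : ⟪v, xk - xk1⟫ = -⟪v, xk1 - xk⟫ := by
      rw [← inner_neg_right]; congr 1; abel
    rw [hip] at this
    linarith
  -- Lipschitz bound on gradient difference
  have hw : ‖g xk1 - g xk‖ ≤ ‖n‖ := by
    have := hlip xk1 xk
    rw [hnormu] at this
    calc ‖g xk1 - g xk‖ ≤ L * ((1 / L) * ‖n‖) := this
      _ = ‖n‖ := by field_simp
  -- key inequality with e, w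
  set e : EuclideanSpace ℝ (Fin d) := g xk - ghat with he
  set w : EuclideanSpace ℝ (Fin d) := g xk1 - g xk with hwdef
  have hkey := key_ineq n e w hw
  have hnew : n + e + w = v + g xk1 := by
    rw [hn, he, hwdef]; module
  rw [hnew] at hkey
  -- express inner products with u
  have hiu : ∀ z : EuclideanSpace ℝ (Fin d), ⟪z, xk1 - xk⟫ = -(1 / L) * ⟪z, n⟫ := by
    intro z; rw [hu, real_inner_smul_right]
  have hien : ⟪e, n⟫ = ⟪g xk, n⟫ - ⟪ghat, n⟫ := by rw [he, inner_sub_left]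
  have hiwn : ⟪w, n⟫ = ⟪g xk1, n⟫ - ⟪g xk, n⟫ := by rw [hwdef, inner_sub_left]
  have hivn : ⟪v, n⟫ = ‖n‖ ^ 2 - ⟪ghat, n⟫ := by
    have : v = n - ghat := by rw [hn]; module
    rw [this, inner_sub_left, real_inner_self_eq_norm_sq]
  -- rewrite hA, hB, hR in scalar form
  rw [hiu] at hA hB hR
  rw [hnormu] at hA hB
  have hL2 : L / 2 * ((1 / L) * ‖n‖) ^ 2 = 1 / (2 * L) * ‖n‖ ^ 2 := by
    field_simp
  rw [hL2] at hA hB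
  -- combine: (5/6) hA + (1/6) hB + hR, plus key inequality
  have hLpos : (0:ℝ) < L := hL
  have hcomb : f xk1 + r xk1 ≤ f xk + r xk + (1 / L) *
      (-⟪e, n⟫ - (1 / 6) * ⟪w, n⟫ - (1 / 2) * ‖n‖ ^ 2) := by
    have hexpand : (1 / L) * (-⟪e, n⟫ - (1 / 6) * ⟪w, n⟫ - (1 / 2) * ‖n‖ ^ 2)
        = (5 / 6) * (-(1 / L) * ⟪g xk, n⟫ + 1 / (2 * L) * ‖n‖ ^ 2)
          + (1 / 6) * (-(1 / L) * ⟪g xk1, n⟫ + 1 / (2 * L) * ‖n‖ ^ 2)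
          + (-(1 / L) * ⟪v, n⟫) := by
      rw [hien, hiwn, hivn]
      have hLne : L ≠ 0 := ne_of_gt hLpos
      field_simp
      ring
    rw [hexpand]
    linarith
  have hfinal : (1 / L) * (-⟪e, n⟫ - (1 / 6) * ⟪w, n⟫ - (1 / 2) * ‖n‖ ^ 2) ≤
      -(1 / (12 * L)) * ‖v + g xk1‖ ^ 2 + (5 / (6 * L)) * ‖e‖ ^ 2 := by
    have hinv : (0:ℝ) < 1 / L := by positivity
    have := mul_le_mul_of_nonneg_left hkey (le_of_lt hinv)
    calc (1 / L) * (-⟪e, n⟫ - (1 / 6) * ⟪w, n⟫ - (1 / 2) * ‖n‖ ^ 2)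
        ≤ (1 / L) * (-(1 / 12) * ‖v + g xk1‖ ^ 2 + (5 / 6) * ‖e‖ ^ 2) := this
      _ = -(1 / (12 * L)) * ‖v + g xk1‖ ^ 2 + (5 / (6 * L)) * ‖e‖ ^ 2 := by
          field_simp
  have : f xk1 + r xk1 ≤ f xk + r xk +
      (-(1 / (12 * L)) * ‖v + g xk1‖ ^ 2 + (5 / (6 * L)) * ‖e‖ ^ 2) := by
    linarith
  rw [he] at this
  linarith
end

section
/- Let F = f + r with f convex and L-Lipschitz differentiable and r convex, and let x_{k+1} = prox_{r/L}(x_k - (1/L) hat{g}_k). Assume F(x_{k+1}) <= F(x_k) - (1/(12L)) ||tilde{Delta}_k||_2^2 + (5/(6L)) ||g_k - hat{g}_k||_2^2, where tilde{Delta}_k = -(tilde{nabla} r(x_{k+1}) + nabla f(x_{k+1})). Then the errors e_k = F(x_k) - min F satisfy e_{k+1} + e_{k+1}^2 / (12 L ||x_{k+1} - P_*(x_{k+1})||_2^2) <= e_k + (5/(6L)) ||g_k - hat{g}_k||_2^2. -/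
open scoped RealInnerProductSpace

/-- One-step inequality for the errors of inexact proximal gradient descent. -/
theorem prox_error_recursion {d : ℕ} (L err : ℝ) (hL : 0 < L) (herr : 0 ≤ err)
    (F : EuclideanSpace ℝ (Fin d) → ℝ) (hconv : ConvexOn ℝ Set.univ F)
    (xk xk1 p : EuclideanSpace ℝ (Fin d)) (Δ : EuclideanSpace ℝ (Fin d))
    (hp : ∀ y, F p ≤ F y)
    (hproj : ∀ q, (∀ y, F q ≤ F y) → ‖xk1 - p‖ ≤ ‖xk1 - q‖)
    (hsub : ∀ y, F xk1 + ⟪-Δ, y - xk1⟫ ≤ F y)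
    (hdesc : F xk1 ≤ F xk - (1 / (12 * L)) * ‖Δ‖ ^ 2 + (5 / (6 * L)) * err) :
    (F xk1 - F p) + (F xk1 - F p) ^ 2 / (12 * L * ‖xk1 - p‖ ^ 2)
      ≤ (F xk - F p) + (5 / (6 * L)) * err := by
  set e := F xk1 - F p with he
  have he0 : 0 ≤ e := sub_nonneg.2 (hp xk1)
  have hek : 0 ≤ F xk - F p := sub_nonneg.2 (hp xk)
  have herr' : 0 ≤ (5 / (6 * L)) * err := by positivity
  by_cases hn : ‖xk1 - p‖ = 0
  · have hx : xk1 = p := by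
      have := norm_eq_zero.mp hn; exact sub_eq_zero.mp this
    have : e = 0 := by simp [he, hx]
    rw [this, hn]
    norm_num
    linarith
  · have hnpos : 0 < ‖xk1 - p‖ := lt_of_le_of_ne (norm_nonneg _) (Ne.symm hn)
    -- e ≤ ‖Δ‖ * ‖xk1 - p‖
    have hsubp := hsub p
    have hinner : ⟪-Δ, xk1 - p⟫ ≤ ‖Δ‖ * ‖xk1 - p‖ := by
      calc ⟪-Δ, xk1 - p⟫ ≤ ‖(-Δ)‖ * ‖xk1 - p‖ := real_inner_le_norm _ _
        _ = ‖Δ‖ * ‖xk1 - p‖ := by rw [norm_neg]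
    have hineq : e ≤ ‖Δ‖ * ‖xk1 - p‖ := by
      have h1 : ⟪-Δ, p - xk1⟫ = -⟪-Δ, xk1 - p⟫ := by
        rw [← inner_neg_right]; congr 1; abel
      have := hsub p
      rw [h1] at this
      linarith
    have hsq : e ^ 2 ≤ ‖Δ‖ ^ 2 * ‖xk1 - p‖ ^ 2 := by
      have := mul_self_le_mul_self he0 hineq
      nlinarith [norm_nonneg Δ, norm_nonneg (xk1 - p)]
    have hdiv : e ^ 2 / (12 * L * ‖xk1 - p‖ ^ 2) ≤ (1 / (12 * L)) * ‖Δ‖ ^ 2 := by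
      rw [div_le_iff₀ (by positivity)]
      have heq : (1 / (12 * L)) * ‖Δ‖ ^ 2 * (12 * L * ‖xk1 - p‖ ^ 2)
          = ‖Δ‖ ^ 2 * ‖xk1 - p‖ ^ 2 := by
        field_simp
      nlinarith [hsq, heq]
    linarith
end

section
/- A continuously differentiable function f: R^d -> R (with d >= 2) whose gradient is everywhere s-sparse for some s < d cannot be strongly convex: there is no mu > 0 such that f(y) - f(x) >= <nabla f(x), y - x> + (mu/2)||y - x||_2^2 for all x, y. -/
open scoped RealInnerProductSpace

/-- A continuously differentiable function with everywhere s-sparse gradients (s < d,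
d ≥ 2) cannot be strongly convex. -/
theorem sparse_gradients_not_strongly_convex {d s : ℕ} (hd : 2 ≤ d) (hs : s < d)
    (f : EuclideanSpace ℝ (Fin d) → ℝ) (hf : ContDiff ℝ 1 f)
    (hsparse : ∀ x : EuclideanSpace ℝ (Fin d),
      (Finset.univ.filter fun i => gradient f x i ≠ 0).card ≤ s) :
    ¬ ∃ μ : ℝ, 0 < μ ∧ ∀ x y : EuclideanSpace ℝ (Fin d),
      f x + ⟪gradient f x, y - x⟫ + μ / 2 * ‖y - x‖ ^ 2 ≤ f y := by
  rintro ⟨μ, hμ, hsc⟩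
  have hdiff : Differentiable ℝ f := hf.differentiable one_ne_zero
  -- the all-ones vector
  set b : EuclideanSpace ℝ (Fin d) := WithLp.toLp 2 (fun _ => 1) with hb
  -- the tilted function g
  set g : EuclideanSpace ℝ (Fin d) → ℝ := fun x => f x + -⟪b, x⟫ with hg
  have hgcont : Continuous g := by
    exact hf.continuous.add (Continuous.neg (continuous_const.inner continuous_id))
  -- coercivity of g
  set c : ℝ := ‖gradient f 0 - b‖ with hc
  have hlower : ∀ x : EuclideanSpace ℝ (Fin d),
      f 0 + (μ / 2 * ‖x‖ ^ 2 - c * ‖x‖) ≤ g x := by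
    intro x
    have h1 := hsc 0 x
    simp only [sub_zero] at h1
    have h2 : -(c * ‖x‖) ≤ ⟪gradient f 0 - b, x⟫ := by
      have h4 := abs_real_inner_le_norm (gradient f 0 - b) x
      have h5 := neg_abs_le (⟪gradient f 0 - b, x⟫)
      rw [hc]
      linarith
    have h3 : ⟪gradient f 0 - b, x⟫ = ⟪gradient f 0, x⟫ - ⟪b, x⟫ := by
      rw [inner_sub_left]
    simp only [hg]
    nlinarith [h1, h2, h3]
  have hcoer : Filter.Tendsto g (Filter.cocompact _) Filter.atTop := by
    have hq : Filter.Tendsto (fun r : ℝ => f 0 + (μ / 2 * r ^ 2 - c * r))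
        Filter.atTop Filter.atTop := by
      have : Filter.Tendsto (fun r : ℝ => μ / 2 * r ^ 2 - c * r) Filter.atTop Filter.atTop := by
        have heq : ∀ r : ℝ, μ / 2 * r ^ 2 - c * r = r * (μ / 2 * r - c) := by
          intro r; ring
        simp only [heq]
        exact Filter.Tendsto.atTop_mul_atTop₀ Filter.tendsto_id
          (Filter.tendsto_atTop_add_const_right _ (-c)
            ((Filter.tendsto_id (α := ℝ)).const_mul_atTop (by positivity)))
      exact Filter.tendsto_atTop_add_const_left _ _ this
    exact Filter.tendsto_atTop_mono hlower
      (hq.comp tendsto_norm_cocompact_atTop)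
  -- g attains a global minimum
  obtain ⟨a, ha⟩ := hgcont.exists_forall_le hcoer
  -- the gradient of f at a equals b
  have hib : HasFDerivAt (fun x : EuclideanSpace ℝ (Fin d) => ⟪b, x⟫)
      (innerSL ℝ b) a := (innerSL ℝ b).hasFDerivAt
  have hfd : HasFDerivAt f (fderiv ℝ f a) a := (hdiff a).hasFDerivAt
  have hgd : HasFDerivAt g (fderiv ℝ f a - innerSL ℝ b) a := by
    exact (hfd.sub hib).congr_of_eventuallyEq
      (Filter.Eventually.of_forall fun x => by show f x + -⟪b, x⟫ = f x - ⟪b, x⟫; ring)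
  have hlocmin : IsLocalMin g a := Filter.Eventually.of_forall ha
  have hzero : fderiv ℝ g a = 0 := hlocmin.fderiv_eq_zero
  have hfda : fderiv ℝ f a = innerSL ℝ b := by
    have h := hgd.fderiv
    rw [hzero] at h
    exact sub_eq_zero.mp h.symm
  have hgrad : gradient f a = b := by
    have h1 : HasFDerivAt f (innerSL ℝ b) a := hfda ▸ hfd
    have h2 := hasFDerivAt_iff_hasGradientAt.mp h1
    have h3 : (InnerProductSpace.toDual ℝ (EuclideanSpace ℝ (Fin d))).symm (innerSL ℝ b) = b := by
      apply (InnerProductSpace.toDual ℝ (EuclideanSpace ℝ (Fin d))).injective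
      rw [LinearIsometryEquiv.apply_symm_apply]
      ext y
      simp [InnerProductSpace.toDual_apply_apply]
    rw [h3] at h2
    exact h2.gradient
  -- contradiction with sparsity
  have hcard := hsparse a
  rw [hgrad] at hcard
  have hbne : ∀ i : Fin d, b i ≠ 0 := fun i => by simp [hb]
  have : (Finset.univ.filter fun i => b i ≠ 0) = Finset.univ := by
    apply Finset.filter_true_of_mem
    intro i _
    exact hbne i
  rw [this, Finset.card_univ, Fintype.card_fin] at hcard
  omega
end

section
/- If Z is an m x d matrix satisfying the restricted isometry property of order 4s with constant delta_{4s} < 1, then for every vector v in R^d (not necessarily sparse), ||Z v||_2 <= sqrt(1 + delta_{4s}) (||v||_2 + ||v||_1 / sqrt(s)). -/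
/-- ℓ² triangle inequality for sums of squares. -/
lemma rip_tri {m : ℕ} (a b : Fin m → ℝ) :
    Real.sqrt (∑ i, (a i + b i) ^ 2) ≤
      Real.sqrt (∑ i, a i ^ 2) + Real.sqrt (∑ i, b i ^ 2) := by
  set na := Real.sqrt (∑ i, a i ^ 2) with hna
  set nb := Real.sqrt (∑ i, b i ^ 2) with hnb
  have ha0 : (0:ℝ) ≤ ∑ i, a i ^ 2 := Finset.sum_nonneg fun i _ => sq_nonneg _
  have hb0 : (0:ℝ) ≤ ∑ i, b i ^ 2 := Finset.sum_nonneg fun i _ => sq_nonneg _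
  have hna2 : na ^ 2 = ∑ i, a i ^ 2 := Real.sq_sqrt ha0
  have hnb2 : nb ^ 2 = ∑ i, b i ^ 2 := Real.sq_sqrt hb0
  have hcs : ∑ i, a i * b i ≤ na * nb :=
    Real.sum_mul_le_sqrt_mul_sqrt _ _ _
  have hexp : ∑ i, (a i + b i) ^ 2
      = (∑ i, a i ^ 2) + 2 * (∑ i, a i * b i) + (∑ i, b i ^ 2) := by
    rw [Finset.mul_sum, ← Finset.sum_add_distrib, ← Finset.sum_add_distrib]
    exact Finset.sum_congr rfl fun i _ => by ring
  have h1 : ∑ i, (a i + b i) ^ 2 ≤ (na + nb) ^ 2 := by nlinarith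
  calc Real.sqrt (∑ i, (a i + b i) ^ 2) ≤ Real.sqrt ((na + nb) ^ 2) :=
        Real.sqrt_le_sqrt h1
    _ = na + nb := Real.sqrt_sq (by positivity)

/-- Selection of k largest elements. -/
lemma rip_select {d : ℕ} (S : Finset (Fin d)) (f : Fin d → ℝ) :
    ∀ k, k ≤ S.card → ∃ T, T ⊆ S ∧ T.card = k ∧
      ∀ i ∈ T, ∀ j ∈ S, j ∉ T → f j ≤ f i := by
  intro k
  induction k with
  | zero => intro _; exact ⟨∅, by simp⟩
  | succ k ih =>
    intro hk
    obtain ⟨T, hTS, hTc, hTmax⟩ := ih (Nat.le_of_succ_le hk)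
    have hne : (S \ T).Nonempty := by
      rw [← Finset.card_pos, Finset.card_sdiff_of_subset hTS, hTc]
      omega
    obtain ⟨a, haST, hamax⟩ := Finset.exists_max_image (S \ T) f hne
    have haS : a ∈ S := (Finset.mem_sdiff.1 haST).1
    have haT : a ∉ T := (Finset.mem_sdiff.1 haST).2
    refine ⟨insert a T, ?_, ?_, ?_⟩
    · exact Finset.insert_subset haS hTS
    · rw [Finset.card_insert_of_notMem haT, hTc]
    · intro i hi j hjS hj
      have hjT : j ∉ T := fun h => hj (Finset.mem_insert_of_mem h)
      rcases Finset.mem_insert.1 hi with rfl | hiT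
      · exact hamax j (Finset.mem_sdiff.2 ⟨hjS, hjT⟩)
      · exact hTmax i hiT j hjS hjT



lemma rip_key {m d : ℕ} (s : ℕ) (hs : 1 ≤ s)
    (δ : ℝ) (hδ0 : 0 < δ)
    (Z : Matrix (Fin m) (Fin d) ℝ)
    (hRIP : ∀ v : Fin d → ℝ, (Finset.univ.filter fun j => v j ≠ 0).card ≤ 4 * s →
      (1 - δ) * (∑ j, v j ^ 2) ≤ ∑ i, Z.mulVec v i ^ 2 ∧
      ∑ i, Z.mulVec v i ^ 2 ≤ (1 + δ) * (∑ j, v j ^ 2)) :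
    ∀ n : ℕ, ∀ v : Fin d → ℝ, ∀ M : ℝ, 0 ≤ M → (∀ j, |v j| ≤ M) →
      (Finset.univ.filter fun j => v j ≠ 0).card ≤ n →
      Real.sqrt (∑ i, Z.mulVec v i ^ 2) ≤
        Real.sqrt (1 + δ) * (Real.sqrt s * M + (∑ j, |v j|) / Real.sqrt s) := by
  have hssq : (0:ℝ) < Real.sqrt s := Real.sqrt_pos.2 (by exact_mod_cast hs)
  have hδ1' : (0:ℝ) ≤ 1 + δ := by linarith
  have hsqδ : (0:ℝ) ≤ Real.sqrt (1 + δ) := Real.sqrt_nonneg _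
  intro n
  induction n using Nat.strong_induction_on with
  | _ n IH =>
    intro v M hM0 hMb hcard
    set supp := Finset.univ.filter fun j => v j ≠ 0 with hsupp
    -- generic: bound ∑ v² for restricted vectors
    by_cases hle : supp.card ≤ s
    · -- base case: v is s-sparse
      have hub := (hRIP v (le_trans hle (by omega))).2
      have hsum : ∑ j, v j ^ 2 ≤ (s : ℝ) * M ^ 2 := by
        have h1 : ∑ j, v j ^ 2 = ∑ j ∈ supp, v j ^ 2 := by
          rw [hsupp]
          rw [Finset.sum_filter_of_ne]
          intro j _ h
          intro hv; rw [hv] at h; simp at h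
        have h2 : ∑ j ∈ supp, v j ^ 2 ≤ supp.card • (M ^ 2) := by
          apply Finset.sum_le_card_nsmul
          intro j _
          calc v j ^ 2 = |v j| ^ 2 := (sq_abs _).symm
            _ ≤ M ^ 2 := by nlinarith [hMb j, abs_nonneg (v j)]
        rw [h1]
        calc ∑ j ∈ supp, v j ^ 2 ≤ supp.card • (M ^ 2) := h2
          _ = (supp.card : ℝ) * M ^ 2 := by simp [nsmul_eq_mul]
          _ ≤ (s : ℝ) * M ^ 2 := by
              apply mul_le_mul_of_nonneg_right _ (sq_nonneg M)
              exact_mod_cast hle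
      have : Real.sqrt (∑ i, Z.mulVec v i ^ 2) ≤
          Real.sqrt ((1 + δ) * ((s:ℝ) * M ^ 2)) := by
        apply Real.sqrt_le_sqrt
        calc ∑ i, Z.mulVec v i ^ 2 ≤ (1 + δ) * ∑ j, v j ^ 2 := hub
          _ ≤ (1 + δ) * ((s:ℝ) * M ^ 2) := by
              apply mul_le_mul_of_nonneg_left hsum hδ1'
      have heq : Real.sqrt ((1 + δ) * ((s:ℝ) * M ^ 2)) =
          Real.sqrt (1 + δ) * (Real.sqrt s * M) := by
        rw [Real.sqrt_mul hδ1', Real.sqrt_mul (by positivity)  , Real.sqrt_sq hM0]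
      have hl1 : 0 ≤ (∑ j, |v j|) / Real.sqrt s := by positivity
      calc Real.sqrt (∑ i, Z.mulVec v i ^ 2) ≤ Real.sqrt (1+δ) * (Real.sqrt s * M) :=
            heq ▸ this
        _ ≤ Real.sqrt (1 + δ) * (Real.sqrt s * M + (∑ j, |v j|) / Real.sqrt s) := by
            apply mul_le_mul_of_nonneg_left (by linarith) hsqδ
    · -- inductive step
      push_neg at hle
      obtain ⟨T, hTS, hTc, hTmax⟩ := rip_select supp (fun j => |v j|) s hle.le
      set a : Fin d → ℝ := fun j => if j ∈ T then v j else 0 with hadef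
      set w : Fin d → ℝ := fun j => if j ∈ T then 0 else v j with hwdef
      have hvaw : v = a + w := by
        funext j; simp only [hadef, hwdef, Pi.add_apply]
        split <;> simp
      -- support of w
      have hws : (Finset.univ.filter fun j => w j ≠ 0) = supp \ T := by
        ext j
        by_cases hjT : j ∈ T
        · simp [Finset.mem_filter, Finset.mem_sdiff, hwdef, hjT, hsupp]
        · simp [Finset.mem_filter, Finset.mem_sdiff, hwdef, hjT, hsupp]
      have hwcard : (Finset.univ.filter fun j => w j ≠ 0).card = supp.card - s := by
        rw [hws, Finset.card_sdiff_of_subset hTS, hTc]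
      -- bound for w entries
      set Mw : ℝ := (∑ i ∈ T, |v i|) / s with hMw
      have hMw0 : 0 ≤ Mw := by positivity
      have hMwb : ∀ j, |w j| ≤ Mw := by
        intro j
        by_cases hjT : j ∈ T
        · simp [hwdef, hjT, hMw0]
        · have hwj : w j = v j := by simp [hwdef, hjT]
          rw [hwj]
          by_cases hjs : j ∈ supp
          · have h1 : ∀ i ∈ T, |v j| ≤ |v i| := fun i hi => hTmax i hi j hjs hjT
            have h2 : T.card • |v j| ≤ ∑ i ∈ T, |v i| :=
              Finset.card_nsmul_le_sum T _ _ h1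
            rw [hTc, nsmul_eq_mul] at h2
            rw [hMw, le_div_iff₀ (by exact_mod_cast hs : (0:ℝ) < s)]
            linarith [h2]
          · have : v j = 0 := by
              by_contra h
              exact hjs (by rw [hsupp]; exact Finset.mem_filter.2 ⟨Finset.mem_univ j, h⟩)
            simp [this, hMw0]
      -- apply IH to w
      have hn' : supp.card - s < n := by omega
      have hZw := IH (supp.card - s) (by omega) w Mw hMw0 hMwb (le_of_eq hwcard)
      -- bound for a
      have hacard : (Finset.univ.filter fun j => a j ≠ 0).card ≤ 4 * s := by
        have : (Finset.univ.filter fun j => a j ≠ 0) ⊆ T := by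
          intro j hj
          simp only [Finset.mem_filter, hadef] at hj
          by_contra h
          simp [h] at hj
        calc _ ≤ T.card := Finset.card_le_card this
          _ = s := hTc
          _ ≤ 4 * s := by omega
      have hasum : ∑ j, a j ^ 2 ≤ (s : ℝ) * M ^ 2 := by
        have h1 : ∑ j, a j ^ 2 = ∑ j ∈ T, v j ^ 2 := by
          rw [← Finset.sum_filter_of_ne (s := Finset.univ) (p := fun j => j ∈ T)]
          · rw [Finset.filter_mem_eq_inter, Finset.univ_inter]
            exact Finset.sum_congr rfl fun j hj => by simp [hadef, hj]
          · intro j _ h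
            by_contra hjT
            simp [hadef, hjT] at h
        rw [h1]
        calc ∑ j ∈ T, v j ^ 2 ≤ T.card • (M ^ 2) := by
              apply Finset.sum_le_card_nsmul
              intro j _
              calc v j ^ 2 = |v j| ^ 2 := (sq_abs _).symm
                _ ≤ M ^ 2 := by nlinarith [hMb j, abs_nonneg (v j)]
          _ = (s : ℝ) * M ^ 2 := by rw [hTc]; simp [nsmul_eq_mul]
      have hZa : Real.sqrt (∑ i, Z.mulVec a i ^ 2) ≤
          Real.sqrt (1 + δ) * (Real.sqrt s * M) := by
        have hub := (hRIP a hacard).2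
        have : Real.sqrt (∑ i, Z.mulVec a i ^ 2) ≤
            Real.sqrt ((1 + δ) * ((s:ℝ) * M ^ 2)) := by
          apply Real.sqrt_le_sqrt
          calc ∑ i, Z.mulVec a i ^ 2 ≤ (1 + δ) * ∑ j, a j ^ 2 := hub
            _ ≤ (1 + δ) * ((s:ℝ) * M ^ 2) := mul_le_mul_of_nonneg_left hasum hδ1'
        calc Real.sqrt (∑ i, Z.mulVec a i ^ 2) ≤ Real.sqrt ((1+δ) * ((s:ℝ) * M^2)) := this
          _ = Real.sqrt (1+δ) * (Real.sqrt s * M) := by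
              rw [Real.sqrt_mul hδ1', Real.sqrt_mul (by positivity), Real.sqrt_sq hM0]
      -- triangle
      have htri : Real.sqrt (∑ i, Z.mulVec v i ^ 2) ≤
          Real.sqrt (∑ i, Z.mulVec a i ^ 2) + Real.sqrt (∑ i, Z.mulVec w i ^ 2) := by
        have : Z.mulVec v = fun i => Z.mulVec a i + Z.mulVec w i := by
          rw [hvaw, Matrix.mulVec_add]; rfl
        rw [this]
        exact rip_tri _ _
      -- arithmetic: √s * Mw = (∑ T |v|)/√s
      have hMweq : Real.sqrt s * Mw = (∑ i ∈ T, |v i|) / Real.sqrt s := by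
        have hmul : Real.sqrt s * Real.sqrt s = (s:ℝ) := Real.mul_self_sqrt (by positivity)
        have hs0 : (s:ℝ) ≠ 0 := by positivity
        rw [hMw, eq_div_iff (ne_of_gt hssq)]
        field_simp
        linear_combination (∑ i ∈ T, |v i|) * hmul
      -- ℓ¹ split
      have hl1 : (∑ i ∈ T, |v i|) + (∑ j, |w j|) = ∑ j, |v j| := by
        have h1 : ∑ i ∈ T, |v i| = ∑ j, |a j| := by
          rw [← Finset.sum_filter_of_ne (s := Finset.univ) (p := fun j => j ∈ T)]
          · rw [Finset.filter_mem_eq_inter, Finset.univ_inter]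
            exact Finset.sum_congr rfl fun j hj => by simp [hadef, hj]
          · intro j _ h
            by_contra hjT
            simp [hadef, hjT] at h
        rw [h1, ← Finset.sum_add_distrib]
        apply Finset.sum_congr rfl
        intro j _
        simp only [hadef, hwdef]
        split <;> simp
      calc Real.sqrt (∑ i, Z.mulVec v i ^ 2)
          ≤ Real.sqrt (∑ i, Z.mulVec a i ^ 2) + Real.sqrt (∑ i, Z.mulVec w i ^ 2) := htri
        _ ≤ Real.sqrt (1+δ) * (Real.sqrt s * M) +
            Real.sqrt (1+δ) * (Real.sqrt s * Mw + (∑ j, |w j|) / Real.sqrt s) := by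
            exact add_le_add hZa hZw
        _ = Real.sqrt (1+δ) * (Real.sqrt s * M + (∑ j, |v j|) / Real.sqrt s) := by
            rw [hMweq, ← hl1, add_div]
            ring

/-- The upper RIP bound extends from 4s-sparse vectors to arbitrary vectors. -/
theorem RIP_extends_to_all_vectors {m d : ℕ} (s : ℕ) (hs : 1 ≤ s)
    (δ : ℝ) (hδ0 : 0 < δ) (hδ1 : δ < 1)
    (Z : Matrix (Fin m) (Fin d) ℝ)
    (hRIP : ∀ v : Fin d → ℝ, (Finset.univ.filter fun j => v j ≠ 0).card ≤ 4 * s →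
      (1 - δ) * (∑ j, v j ^ 2) ≤ ∑ i, Z.mulVec v i ^ 2 ∧
      ∑ i, Z.mulVec v i ^ 2 ≤ (1 + δ) * (∑ j, v j ^ 2)) :
    ∀ v : Fin d → ℝ, Real.sqrt (∑ i, Z.mulVec v i ^ 2) ≤
      Real.sqrt (1 + δ) * (Real.sqrt (∑ j, v j ^ 2) + (∑ j, |v j|) / Real.sqrt s) := by
  have hssq : (0:ℝ) < Real.sqrt s := Real.sqrt_pos.2 (by exact_mod_cast hs)
  have hδ1' : (0:ℝ) ≤ 1 + δ := by linarith
  have hsqδ : (0:ℝ) ≤ Real.sqrt (1 + δ) := Real.sqrt_nonneg _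
  intro v
  set supp := Finset.univ.filter fun j => v j ≠ 0 with hsupp
  by_cases hle : supp.card ≤ s
  · -- v is s-sparse
    have hub := (hRIP v (le_trans hle (by omega))).2
    have h1 : Real.sqrt (∑ i, Z.mulVec v i ^ 2) ≤
        Real.sqrt ((1 + δ) * ∑ j, v j ^ 2) := Real.sqrt_le_sqrt hub
    have h2 : Real.sqrt ((1 + δ) * ∑ j, v j ^ 2) =
        Real.sqrt (1 + δ) * Real.sqrt (∑ j, v j ^ 2) := Real.sqrt_mul hδ1' _
    have h3 : 0 ≤ (∑ j, |v j|) / Real.sqrt s := by positivity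
    calc Real.sqrt (∑ i, Z.mulVec v i ^ 2)
        ≤ Real.sqrt (1 + δ) * Real.sqrt (∑ j, v j ^ 2) := h2 ▸ h1
      _ ≤ _ := mul_le_mul_of_nonneg_left (by linarith) hsqδ
  · push_neg at hle
    obtain ⟨T, hTS, hTc, hTmax⟩ := rip_select supp (fun j => |v j|) s hle.le
    set a : Fin d → ℝ := fun j => if j ∈ T then v j else 0 with hadef
    set w : Fin d → ℝ := fun j => if j ∈ T then 0 else v j with hwdef
    have hvaw : v = a + w := by
      funext j; simp only [hadef, hwdef, Pi.add_apply]
      split <;> simp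
    -- bound for w entries
    set Mw : ℝ := (∑ i ∈ T, |v i|) / s with hMw
    have hMw0 : 0 ≤ Mw := by positivity
    have hMwb : ∀ j, |w j| ≤ Mw := by
      intro j
      by_cases hjT : j ∈ T
      · simp [hwdef, hjT, hMw0]
      · have hwj : w j = v j := by simp [hwdef, hjT]
        rw [hwj]
        by_cases hjs : j ∈ supp
        · have h1 : ∀ i ∈ T, |v j| ≤ |v i| := fun i hi => hTmax i hi j hjs hjT
          have h2 : T.card • |v j| ≤ ∑ i ∈ T, |v i| :=
            Finset.card_nsmul_le_sum T _ _ h1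
          rw [hTc, nsmul_eq_mul] at h2
          rw [hMw, le_div_iff₀ (by exact_mod_cast hs : (0:ℝ) < s)]
          linarith [h2]
        · have : v j = 0 := by
            by_contra h
            exact hjs (by rw [hsupp]; exact Finset.mem_filter.2 ⟨Finset.mem_univ j, h⟩)
          simp [this, hMw0]
    have hZw := rip_key s hs δ hδ0 Z hRIP
      (Finset.univ.filter fun j => w j ≠ 0).card w Mw hMw0 hMwb le_rfl
    -- bound for a
    have hacard : (Finset.univ.filter fun j => a j ≠ 0).card ≤ 4 * s := by
      have hsub : (Finset.univ.filter fun j => a j ≠ 0) ⊆ T := by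
        intro j hj
        simp only [Finset.mem_filter, hadef] at hj
        by_contra h
        simp [h] at hj
      calc _ ≤ T.card := Finset.card_le_card hsub
        _ = s := hTc
        _ ≤ 4 * s := by omega
    have hasum : ∑ j, a j ^ 2 ≤ ∑ j, v j ^ 2 := by
      apply Finset.sum_le_sum
      intro j _
      simp only [hadef]
      split
      · exact le_rfl
      · simpa using sq_nonneg (v j)
    have hZa : Real.sqrt (∑ i, Z.mulVec a i ^ 2) ≤
        Real.sqrt (1 + δ) * Real.sqrt (∑ j, v j ^ 2) := by
      have hub := (hRIP a hacard).2
      calc Real.sqrt (∑ i, Z.mulVec a i ^ 2)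
          ≤ Real.sqrt ((1 + δ) * ∑ j, v j ^ 2) := by
            apply Real.sqrt_le_sqrt
            calc ∑ i, Z.mulVec a i ^ 2 ≤ (1 + δ) * ∑ j, a j ^ 2 := hub
              _ ≤ (1 + δ) * ∑ j, v j ^ 2 := mul_le_mul_of_nonneg_left hasum hδ1'
        _ = Real.sqrt (1 + δ) * Real.sqrt (∑ j, v j ^ 2) := Real.sqrt_mul hδ1' _
    have htri : Real.sqrt (∑ i, Z.mulVec v i ^ 2) ≤
        Real.sqrt (∑ i, Z.mulVec a i ^ 2) + Real.sqrt (∑ i, Z.mulVec w i ^ 2) := by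
      have : Z.mulVec v = fun i => Z.mulVec a i + Z.mulVec w i := by
        rw [hvaw, Matrix.mulVec_add]; rfl
      rw [this]
      exact rip_tri _ _
    have hMweq : Real.sqrt s * Mw = (∑ i ∈ T, |v i|) / Real.sqrt s := by
      have hmul : Real.sqrt s * Real.sqrt s = (s:ℝ) := Real.mul_self_sqrt (by positivity)
      have hs0 : (s:ℝ) ≠ 0 := by positivity
      rw [hMw, eq_div_iff (ne_of_gt hssq)]
      field_simp
      linear_combination (∑ i ∈ T, |v i|) * hmul
    have hl1 : (∑ i ∈ T, |v i|) + (∑ j, |w j|) = ∑ j, |v j| := by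
      have h1 : ∑ i ∈ T, |v i| = ∑ j, |a j| := by
        rw [← Finset.sum_filter_of_ne (s := Finset.univ) (p := fun j => j ∈ T)]
        · rw [Finset.filter_mem_eq_inter, Finset.univ_inter]
          exact Finset.sum_congr rfl fun j hj => by simp [hadef, hj]
        · intro j _ h
          by_contra hjT
          simp [hadef, hjT] at h
      rw [h1, ← Finset.sum_add_distrib]
      apply Finset.sum_congr rfl
      intro j _
      simp only [hadef, hwdef]
      split <;> simp
    calc Real.sqrt (∑ i, Z.mulVec v i ^ 2)
        ≤ Real.sqrt (∑ i, Z.mulVec a i ^ 2) + Real.sqrt (∑ i, Z.mulVec w i ^ 2) := htri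
      _ ≤ Real.sqrt (1+δ) * Real.sqrt (∑ j, v j ^ 2) +
          Real.sqrt (1+δ) * (Real.sqrt s * Mw + (∑ j, |w j|) / Real.sqrt s) :=
          add_le_add hZa hZw
      _ = Real.sqrt (1+δ) * (Real.sqrt (∑ j, v j ^ 2) + (∑ j, |v j|) / Real.sqrt s) := by
          rw [hMweq, ← hl1, add_div]
          ring
end
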